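/- arXiv:1905.01318 — 2 statements merged into one kernel-verified Lean document; each statement's English description precedes it below -/
import Mathlib

section
/- Let Λ be a programmable processor map given in Kraus form and let χ_E be a fixed positive semidefinite d'×d' complex matrix. Then the infidelity cost function C_F(π) := 1 − F(π)², where F(π) := Tr √(√χ_E · Λ(π) · √χ_E), is convex on the set of density matrices: for all density matrices π₀, π₁ and all p ∈ [0,1], C_F(p·π₀ + (1−p)·π₁) ≤ p·C_F(π₀) + (1−p)·C_F(π₁). -/
open Matrix BigOperators
open scoped ComplexOrder Classical

/-- Junk-valued positive semidefinite square root: for a positive semidefinite matrix it is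
the PSD square root, otherwise it is `0`. -/
noncomputable def msqrt {n : Type*} [Fintype n] [DecidableEq n]
    (M : Matrix n n ℂ) : Matrix n n ℂ :=
  if h : M.PosSemidef then
    (h.1.eigenvectorUnitary : Matrix n n ℂ) * diagonal ((↑) ∘ (√·) ∘ h.1.eigenvalues) *
      (star h.1.eigenvectorUnitary : Matrix n n ℂ) else 0

/-- The PSD square root of a positive semidefinite matrix. -/
noncomputable def Matrix.PosSemidef.sqrt {n : Type*} [Fintype n] [DecidableEq n]
    {M : Matrix n n ℂ} (h : M.PosSemidef) : Matrix n n ℂ :=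
  (h.1.eigenvectorUnitary : Matrix n n ℂ) * diagonal ((↑) ∘ (√·) ∘ h.1.eigenvalues) *
    (star h.1.eigenvectorUnitary : Matrix n n ℂ)

/-- The programmable processor map in Kraus form `Λ(π) = ∑ k, A k * π * (A k)ᴴ`. -/
noncomputable def krausMap {d d' K : ℕ} (A : Fin K → Matrix (Fin d') (Fin d) ℂ)
    (π : Matrix (Fin d) (Fin d) ℂ) : Matrix (Fin d') (Fin d') ℂ :=
  ∑ k, A k * π * (A k)ᴴ

/-- The fidelity `F(π) = Tr √(√χ_E · Λ(π) · √χ_E)` between the target Choi matrix `χ_E` and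
the simulated Choi matrix `Λ(π)`. -/
noncomputable def fidelity {d d' K : ℕ} (A : Fin K → Matrix (Fin d') (Fin d) ℂ)
    (χE : Matrix (Fin d') (Fin d') ℂ) (π : Matrix (Fin d) (Fin d) ℂ) : ℝ :=
  (msqrt (msqrt χE * krausMap A π * msqrt χE)).trace.re

namespace InfidelityAux

variable {m n : Type*} [Fintype m] [Fintype n]

lemma msqrt_eq {n : Type*} [Fintype n] [DecidableEq n] {M : Matrix n n ℂ}
    (hM : M.PosSemidef) : msqrt M = hM.sqrt :=
  dif_pos hM

lemma smul_posSemidef {A : Matrix n n ℂ} (hA : A.PosSemidef) {c : ℝ} (hc : 0 ≤ c) :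
    ((c : ℂ) • A).PosSemidef := by
  exact hA.smul (Complex.zero_le_real.mpr hc)

/-- Two matrices stacked vertically (with real scalar prefactors). -/
def stack2 {n' : Type*} (a b : ℝ) (P Q : Matrix n' n ℂ) : Matrix (Fin 2 × n') n ℂ :=
  Matrix.of fun q j => if q.1 = 0 then (a : ℂ) * P q.2 j else (b : ℂ) * Q q.2 j

omit [Fintype n] in
lemma stack2_conjT_mul [Fintype n] {n' : Type*} [Fintype n'] (a b c d : ℝ)
    (P Q R S : Matrix n' n ℂ) :
    (stack2 a b P Q)ᴴ * stack2 c d R S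
      = ((a * c : ℝ) : ℂ) • (Pᴴ * R) + ((b * d : ℝ) : ℂ) • (Qᴴ * S) := by
  ext i j
  simp only [Matrix.mul_apply, Matrix.conjTranspose_apply, Matrix.add_apply, Matrix.smul_apply,
    stack2, Matrix.of_apply, Fintype.sum_prod_type, Fin.sum_univ_two, Fin.isValue,
    one_ne_zero, if_true, if_false, reduceCtorEq, smul_eq_mul]
  push_cast
  rw [Finset.mul_sum, Finset.mul_sum]
  congr 1 <;> refine Finset.sum_congr rfl fun k _ => ?_ <;>
    simp [star_mul', Complex.star_def, Complex.conj_ofReal] <;> ring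

lemma trace_re_nonneg {A : Matrix n n ℂ} (hA : A.PosSemidef) : 0 ≤ A.trace.re := by
  have h : ∀ i, 0 ≤ (A i i).re := by
    intro i
    exact (Complex.nonneg_iff.mp (hA.diag_nonneg (i := i))).1
  rw [Matrix.trace, Complex.re_sum]
  exact Finset.sum_nonneg fun i _ => h i

lemma trace_cs (X Y : Matrix m n ℂ) :
    ((Xᴴ * Y).trace).re ≤
      Real.sqrt ((Xᴴ * X).trace.re) * Real.sqrt ((Yᴴ * Y).trace.re) := by
  have habs : ∀ Z : Matrix m n ℂ,
      (Zᴴ * Z).trace.re = ∑ q : n × m, ‖Z q.2 q.1‖^2 := by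
    intro Z
    rw [Matrix.trace, Complex.re_sum, Fintype.sum_prod_type]
    congr 1; ext j
    simp only [Matrix.diag, Matrix.mul_apply, Matrix.conjTranspose_apply, Complex.re_sum,
      Complex.star_def]
    congr 1; ext i
    rw [← Complex.normSq_eq_conj_mul_self, Complex.sq_norm]
    simp
  have h1 : ((Xᴴ * Y).trace).re = ∑ q : n × m, ((starRingEnd ℂ) (X q.2 q.1) * Y q.2 q.1).re := by
    rw [Matrix.trace, Complex.re_sum, Fintype.sum_prod_type]
    congr 1; ext j
    simp only [Matrix.diag, Matrix.mul_apply, Matrix.conjTranspose_apply, Complex.re_sum,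
      Complex.star_def]
  rw [h1, habs, habs]
  calc ∑ q : n × m, ((starRingEnd ℂ) (X q.2 q.1) * Y q.2 q.1).re
      ≤ ∑ q : n × m, ‖X q.2 q.1‖ * ‖Y q.2 q.1‖ := by
        refine Finset.sum_le_sum fun q _ => ?_
        calc ((starRingEnd ℂ) (X q.2 q.1) * Y q.2 q.1).re
            ≤ ‖(starRingEnd ℂ) (X q.2 q.1) * Y q.2 q.1‖ := Complex.re_le_norm _
          _ = ‖X q.2 q.1‖ * ‖Y q.2 q.1‖ := by
              rw [norm_mul, Complex.norm_conj]
    _ ≤ Real.sqrt (∑ q : n × m, ‖X q.2 q.1‖^2) *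
          Real.sqrt (∑ q : n × m, ‖Y q.2 q.1‖^2) := by
        rw [← Real.sqrt_mul (Finset.sum_nonneg fun q _ => sq_nonneg _)]
        exact Real.le_sqrt_of_sq_le (Finset.sum_mul_sq_le_sq_mul_sq _ _ _)

/-- Conjugation of the diagonal matrix `diag (f ∘ lam)` by the unitary `U`:
a baby functional calculus. -/
noncomputable def Dmat [DecidableEq n] (U : Matrix n n ℂ) (lam : n → ℝ) (f : ℝ → ℝ) :
    Matrix n n ℂ :=
  U * Matrix.diagonal (fun i => (f (lam i) : ℂ)) * star U

section Dmat

variable [DecidableEq n] (U : Matrix n n ℂ) (lam : n → ℝ)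
variable (hU1 : star U * U = 1) (hU2 : U * star U = 1)

include hU1 in
lemma Dmat_mul (f g : ℝ → ℝ) :
    Dmat U lam f * Dmat U lam g = Dmat U lam (fun t => f t * g t) := by
  unfold Dmat
  have h : star U * (U * (Matrix.diagonal (fun i => (g (lam i) : ℂ)) * star U)) =
      Matrix.diagonal (fun i => (g (lam i) : ℂ)) * star U := by
    rw [← Matrix.mul_assoc, hU1, Matrix.one_mul]
  simp only [Matrix.mul_assoc, h]
  rw [← Matrix.mul_assoc (Matrix.diagonal _), Matrix.diagonal_mul_diagonal]
  congr 2
  funext i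
  push_cast
  ring

lemma Dmat_congr (f g : ℝ → ℝ) (h : ∀ i, f (lam i) = g (lam i)) :
    Dmat U lam f = Dmat U lam g := by
  unfold Dmat
  have : (fun i => (f (lam i) : ℂ)) = fun i => (g (lam i) : ℂ) := funext fun i => by rw [h i]
  rw [this]

include hU1 in
lemma Dmat_trace (f : ℝ → ℝ) :
    (Dmat U lam f).trace = ((∑ i, f (lam i) : ℝ) : ℂ) := by
  unfold Dmat
  rw [Matrix.trace_mul_cycle, hU1, Matrix.one_mul, Matrix.trace_diagonal]
  push_cast
  ring

lemma Dmat_psd (f : ℝ → ℝ) (hf : ∀ i, 0 ≤ f (lam i)) :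
    (Dmat U lam f).PosSemidef := by
  unfold Dmat
  rw [Matrix.star_eq_conjTranspose]
  exact (Matrix.posSemidef_diagonal_iff.mpr
    (fun i => Complex.zero_le_real.mpr (hf i))).mul_mul_conjTranspose_same U

include hU2 in
lemma Dmat_one : Dmat U lam (fun _ => 1) = 1 := by
  unfold Dmat
  simp only [Complex.ofReal_one, Matrix.diagonal_one, Matrix.mul_one]
  exact hU2

include hU2 in
lemma Dmat_one_sub (f : ℝ → ℝ) :
    1 - Dmat U lam f = Dmat U lam (fun t => 1 - f t) := by
  conv_lhs => rw [← Dmat_one U lam hU2]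
  unfold Dmat
  rw [← Matrix.sub_mul, ← Matrix.mul_sub, Matrix.diagonal_sub]
  congr 2
  funext i
  push_cast
  ring

end Dmat

lemma key_aux [DecidableEq n] (X : Matrix m n ℂ) (U : Matrix n n ℂ) (lam : n → ℝ)
    (hU1 : star U * U = 1) (hU2 : U * star U = 1) (hlam : ∀ i, 0 ≤ lam i)
    (hspec : Xᴴ * X = Dmat U lam (fun t => t)) :
    ∃ W : Matrix m n ℂ, (1 - Wᴴ * W).PosSemidef ∧
      Wᴴ * X = Dmat U lam Real.sqrt ∧
      ∀ V : Matrix m n ℂ, (1 - Vᴴ * V).PosSemidef →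
        ((Vᴴ * X).trace).re ≤ ((Dmat U lam Real.sqrt).trace).re := by
  have Dmul := Dmat_mul U lam hU1
  have Dcongr := Dmat_congr U lam
  have Dpsd := Dmat_psd U lam
  have Done_sub := Dmat_one_sub U lam hU2
  set fs : ℝ → ℝ := Real.sqrt with hfs
  set fg : ℝ → ℝ := fun t => if t = 0 then 0 else (Real.sqrt t)⁻¹ with hfg
  set find : ℝ → ℝ := fun t => if t = 0 then 0 else 1 with hfind
  have hP : (Dmat U lam fs).PosSemidef := Dpsd _ (fun i => Real.sqrt_nonneg _)
  have hG : (Dmat U lam fg).PosSemidef := by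
    refine Dpsd _ (fun i => ?_)
    simp only [hfg]
    split <;> positivity
  have sqrt_pos : ∀ i, lam i ≠ 0 → Real.sqrt (lam i) ≠ 0 := by
    intro i hi
    exact Real.sqrt_ne_zero'.mpr (lt_of_le_of_ne (hlam i) (Ne.symm hi))
  set W : Matrix m n ℂ := X * Dmat U lam fg with hW
  have hWW : Wᴴ * W = Dmat U lam find := by
    rw [hW, Matrix.conjTranspose_mul, hG.1, Matrix.mul_assoc, ← Matrix.mul_assoc Xᴴ,
      hspec, Dmul, Dmul]
    refine Dcongr _ _ (fun i => ?_)
    simp only [hfg, hfind]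
    by_cases hi : lam i = 0
    · simp [hi]
    · rw [if_neg hi, if_neg hi]
      set s := Real.sqrt (lam i) with hsdef
      have hs : s * s = lam i := Real.mul_self_sqrt (hlam i)
      have hsne : s ≠ 0 := sqrt_pos i hi
      rw [← hs]
      field_simp
  have h1W : (1 - Wᴴ * W).PosSemidef := by
    rw [hWW, Done_sub]
    refine Dpsd _ (fun i => ?_)
    simp only [hfind]
    split <;> norm_num
  have hWX : Wᴴ * X = Dmat U lam fs := by
    rw [hW, Matrix.conjTranspose_mul, hG.1, Matrix.mul_assoc, hspec, Dmul]
    refine Dcongr _ _ (fun i => ?_)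
    simp only [hfg, hfs]
    by_cases hi : lam i = 0
    · simp [hi]
    · rw [if_neg hi]
      set s := Real.sqrt (lam i) with hsdef
      have hs : s * s = lam i := Real.mul_self_sqrt (hlam i)
      have hsne : s ≠ 0 := sqrt_pos i hi
      rw [← hs]
      field_simp
  have hGP : Dmat U lam fg * Dmat U lam fs = Dmat U lam find := by
    rw [Dmul]
    refine Dcongr _ _ (fun i => ?_)
    simp only [hfg, hfind, hfs]
    by_cases hi : lam i = 0
    · simp [hi]
    · rw [if_neg hi, if_neg hi, inv_mul_cancel₀ (sqrt_pos i hi)]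
  have hπpsd : (Dmat U lam find).PosSemidef := by
    refine Dpsd _ (fun i => ?_)
    simp only [hfind]; split <;> norm_num
  have hπh : (Dmat U lam find)ᴴ = Dmat U lam find := hπpsd.1
  have hQπ : (Xᴴ * X) * Dmat U lam find = Xᴴ * X := by
    rw [hspec, Dmul]
    refine (Dcongr _ _ (fun i => ?_)).trans rfl
    simp only [hfind]
    by_cases hi : lam i = 0 <;> simp [hi]
  have hπQ : Dmat U lam find * (Xᴴ * X) = Xᴴ * X := by
    rw [hspec, Dmul]
    refine (Dcongr _ _ (fun i => ?_)).trans rfl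
    simp only [hfind]
    by_cases hi : lam i = 0 <;> simp [hi]
  have hXπ : X * Dmat U lam find = X := by
    have hz : (X - X * Dmat U lam find)ᴴ * (X - X * Dmat U lam find) = 0 := by
      rw [Matrix.conjTranspose_sub, Matrix.conjTranspose_mul, hπh]
      rw [Matrix.sub_mul, Matrix.mul_sub, Matrix.mul_sub]
      have e1 : Xᴴ * (X * Dmat U lam find) = Xᴴ * X := by
        rw [← Matrix.mul_assoc, hQπ]
      have e2 : Dmat U lam find * Xᴴ * X = Xᴴ * X := by
        rw [Matrix.mul_assoc, hπQ]
      have e3 : Dmat U lam find * Xᴴ * (X * Dmat U lam find) = Xᴴ * X := by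
        rw [Matrix.mul_assoc, ← Matrix.mul_assoc Xᴴ, hQπ, hπQ]
      rw [e1, e2, e3]
      simp
    have h0 := Matrix.conjTranspose_mul_self_eq_zero.mp hz
    rw [sub_eq_zero] at h0
    exact h0.symm
  have hXWP : X = W * Dmat U lam fs := by
    rw [hW, Matrix.mul_assoc, hGP, hXπ]
  refine ⟨W, h1W, hWX, ?_⟩
  intro V hV
  set T : Matrix n n ℂ := Dmat U lam (fun t => Real.sqrt (Real.sqrt t)) with hT
  have hTpsd : T.PosSemidef := Dpsd _ (fun i => Real.sqrt_nonneg _)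
  have hTh : Tᴴ = T := hTpsd.1
  have hTT : T * T = Dmat U lam fs := by
    rw [hT, Dmul]
    exact Dcongr _ _ (fun i => Real.mul_self_sqrt (Real.sqrt_nonneg _))
  have htr : (Vᴴ * X).trace = ((V * T)ᴴ * (W * T)).trace := by
    have h1 : Vᴴ * X = (Vᴴ * W * T) * T := by
      rw [hXWP, ← hTT]
      simp only [Matrix.mul_assoc]
    rw [h1, Matrix.trace_mul_comm]
    congr 1
    simp only [Matrix.conjTranspose_mul, hTh, Matrix.mul_assoc]
  have bound : ∀ Z : Matrix m n ℂ, (1 - Zᴴ * Z).PosSemidef →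
      ((Z * T)ᴴ * (Z * T)).trace.re ≤ ((Dmat U lam fs).trace).re := by
    intro Z hZ
    have hps : (T * (1 - Zᴴ * Z) * Tᴴ).PosSemidef := hZ.mul_mul_conjTranspose_same T
    have hexp : T * (1 - Zᴴ * Z) * Tᴴ = Dmat U lam fs - (Z * T)ᴴ * (Z * T) := by
      rw [hTh, Matrix.mul_sub, Matrix.mul_one, Matrix.sub_mul, hTT]
      congr 1
      simp only [Matrix.conjTranspose_mul, hTh, Matrix.mul_assoc]
    rw [hexp] at hps
    have h2 := trace_re_nonneg hps
    rw [Matrix.trace_sub, Complex.sub_re] at h2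
    linarith
  have hTrPnn : 0 ≤ ((Dmat U lam fs).trace).re := trace_re_nonneg hP
  calc ((Vᴴ * X).trace).re = (((V * T)ᴴ * (W * T)).trace).re := by rw [htr]
    _ ≤ Real.sqrt (((V * T)ᴴ * (V * T)).trace.re) *
          Real.sqrt (((W * T)ᴴ * (W * T)).trace.re) := trace_cs _ _
    _ ≤ Real.sqrt (((Dmat U lam fs).trace).re) * Real.sqrt (((Dmat U lam fs).trace).re) :=
        mul_le_mul (Real.sqrt_le_sqrt (bound V hV)) (Real.sqrt_le_sqrt (bound W h1W))
          (Real.sqrt_nonneg _) (Real.sqrt_nonneg _)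
    _ = ((Dmat U lam fs).trace).re := Real.mul_self_sqrt hTrPnn

lemma key [DecidableEq n] (X : Matrix m n ℂ) :
    ∃ W : Matrix m n ℂ, (1 - Wᴴ * W).PosSemidef ∧
      Wᴴ * X = msqrt (Xᴴ * X) ∧
      ∀ V : Matrix m n ℂ, (1 - Vᴴ * V).PosSemidef →
        ((Vᴴ * X).trace).re ≤ ((msqrt (Xᴴ * X)).trace).re := by
  have hQ : (Xᴴ * X).PosSemidef := Matrix.posSemidef_conjTranspose_mul_self X
  rw [msqrt_eq hQ]
  have hU1 : star (hQ.1.eigenvectorUnitary : Matrix n n ℂ) *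
      (hQ.1.eigenvectorUnitary : Matrix n n ℂ) = 1 :=
    Unitary.coe_star_mul_self hQ.1.eigenvectorUnitary
  have hU2 : (hQ.1.eigenvectorUnitary : Matrix n n ℂ) *
      star (hQ.1.eigenvectorUnitary : Matrix n n ℂ) = 1 :=
    Unitary.coe_mul_star_self hQ.1.eigenvectorUnitary
  have hspec : Xᴴ * X = Dmat (hQ.1.eigenvectorUnitary : Matrix n n ℂ) hQ.1.eigenvalues
      (fun t => t) := by
    unfold Dmat
    exact hQ.1.spectral_theorem
  obtain ⟨W, h1, h2, h3⟩ := key_aux X _ _ hU1 hU2 hQ.eigenvalues_nonneg hspec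
  have hsq : Dmat (hQ.1.eigenvectorUnitary : Matrix n n ℂ) hQ.1.eigenvalues Real.sqrt
      = hQ.sqrt := rfl
  rw [hsq] at h2 h3
  exact ⟨W, h1, h2, h3⟩

lemma _root_.Matrix.PosSemidef.posSemidef_sqrt [DecidableEq n] {M : Matrix n n ℂ}
    (hM : M.PosSemidef) : hM.sqrt.PosSemidef :=
  Dmat_psd (hM.1.eigenvectorUnitary : Matrix n n ℂ) hM.1.eigenvalues Real.sqrt
    (fun i => Real.sqrt_nonneg _)

lemma _root_.Matrix.PosSemidef.sqrt_mul_self [DecidableEq n] {M : Matrix n n ℂ}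
    (hM : M.PosSemidef) : hM.sqrt * hM.sqrt = M := by
  have hU1 := Unitary.coe_star_mul_self hM.1.eigenvectorUnitary
  have h := Dmat_mul (hM.1.eigenvectorUnitary : Matrix n n ℂ) hM.1.eigenvalues hU1
    Real.sqrt Real.sqrt
  refine h.trans ((Dmat_congr _ _ _ (fun t => t)
    (fun i => Real.mul_self_sqrt (hM.eigenvalues_nonneg i))).trans ?_)
  exact hM.1.spectral_theorem.symm


lemma core [DecidableEq n] (B₀ B₁ : Matrix n n ℂ)
    (p : ℝ) (hp₀ : 0 ≤ p) (hp₁ : p ≤ 1) :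
    p * (((msqrt (B₀ᴴ * B₀)).trace).re) ^ 2
      + (1 - p) * (((msqrt (B₁ᴴ * B₁)).trace).re) ^ 2
      ≤ (((msqrt ((p : ℂ) • (B₀ᴴ * B₀) + ((1 - p : ℝ) : ℂ) • (B₁ᴴ * B₁))).trace).re) ^ 2 := by
  have hp₁' : 0 ≤ 1 - p := by linarith
  obtain ⟨F₀, hF₀⟩ : ∃ r : ℝ, ((msqrt (B₀ᴴ * B₀)).trace).re = r := ⟨_, rfl⟩
  obtain ⟨F₁, hF₁⟩ : ∃ r : ℝ, ((msqrt (B₁ᴴ * B₁)).trace).re = r := ⟨_, rfl⟩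
  obtain ⟨W₀, hW₀, hW₀X, -⟩ := key B₀
  obtain ⟨W₁, hW₁, hW₁X, -⟩ := key B₁
  obtain ⟨C, hC⟩ : ∃ C, C = stack2 (Real.sqrt p) (Real.sqrt (1 - p)) B₀ B₁ := ⟨_, rfl⟩
  have hCC : Cᴴ * C = (p : ℂ) • (B₀ᴴ * B₀) + ((1 - p : ℝ) : ℂ) • (B₁ᴴ * B₁) := by
    rw [hC, stack2_conjT_mul, Real.mul_self_sqrt hp₀, Real.mul_self_sqrt hp₁']
  obtain ⟨W, hW, hWX, hdual⟩ := key C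
  have hsqrtC : msqrt (Cᴴ * C)
      = msqrt ((p : ℂ) • (B₀ᴴ * B₀) + ((1 - p : ℝ) : ℂ) • (B₁ᴴ * B₁)) := by
    rw [hCC]
  rw [hF₀, hF₁, ← hsqrtC]
  have hRnn : 0 ≤ p * F₀ ^ 2 + (1 - p) * F₁ ^ 2 := by positivity
  rcases eq_or_lt_of_le hRnn with hR0 | hRpos
  · exact le_trans (le_of_eq hR0.symm) (sq_nonneg _)
  obtain ⟨R, hR⟩ : ∃ r : ℝ, r = Real.sqrt (p * F₀ ^ 2 + (1 - p) * F₁ ^ 2) := ⟨_, rfl⟩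
  have hRpos' : 0 < R := hR ▸ Real.sqrt_pos.mpr hRpos
  have hRsq : R ^ 2 = p * F₀ ^ 2 + (1 - p) * F₁ ^ 2 := hR ▸ Real.sq_sqrt hRnn
  obtain ⟨c₀, hc₀⟩ : ∃ r : ℝ, r = Real.sqrt p * F₀ / R := ⟨_, rfl⟩
  obtain ⟨c₁, hc₁⟩ : ∃ r : ℝ, r = Real.sqrt (1 - p) * F₁ / R := ⟨_, rfl⟩
  have hc : c₀ ^ 2 + c₁ ^ 2 = 1 := by
    rw [hc₀, hc₁, div_pow, div_pow, mul_pow, mul_pow, Real.sq_sqrt hp₀, Real.sq_sqrt hp₁',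
      ← add_div, ← hRsq]
    exact div_self (by positivity)
  obtain ⟨V, hV⟩ : ∃ V, V = stack2 c₀ c₁ W₀ W₁ := ⟨_, rfl⟩
  have hc' : ((c₀ ^ 2 : ℝ) : ℂ) + ((c₁ ^ 2 : ℝ) : ℂ) = 1 := by
    rw [← Complex.ofReal_add, hc, Complex.ofReal_one]
  have hVV : 1 - Vᴴ * V = ((c₀ ^ 2 : ℝ) : ℂ) • (1 - W₀ᴴ * W₀)
      + ((c₁ ^ 2 : ℝ) : ℂ) • (1 - W₁ᴴ * W₁) := by
    rw [hV, stack2_conjT_mul]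
    have e0 : ((c₀ * c₀ : ℝ) : ℂ) = ((c₀ ^ 2 : ℝ) : ℂ) := by norm_cast; ring
    have e1 : ((c₁ * c₁ : ℝ) : ℂ) = ((c₁ ^ 2 : ℝ) : ℂ) := by norm_cast; ring
    rw [e0, e1]
    calc 1 - (((c₀ ^ 2 : ℝ) : ℂ) • (W₀ᴴ * W₀) + ((c₁ ^ 2 : ℝ) : ℂ) • (W₁ᴴ * W₁))
        = (((c₀ ^ 2 : ℝ) : ℂ) + ((c₁ ^ 2 : ℝ) : ℂ)) • (1 : Matrix n n ℂ)
            - (((c₀ ^ 2 : ℝ) : ℂ) • (W₀ᴴ * W₀) + ((c₁ ^ 2 : ℝ) : ℂ) • (W₁ᴴ * W₁)) := by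
          rw [hc', one_smul]
      _ = _ := by rw [add_smul, smul_sub, smul_sub]; abel
  have hVpsd : (1 - Vᴴ * V).PosSemidef := by
    rw [hVV]
    exact (smul_posSemidef hW₀ (sq_nonneg c₀)).add (smul_posSemidef hW₁ (sq_nonneg c₁))
  have htrV : ((Vᴴ * C).trace).re = c₀ * Real.sqrt p * F₀ + c₁ * Real.sqrt (1 - p) * F₁ := by
    rw [hV, hC, stack2_conjT_mul, hW₀X, hW₁X, Matrix.trace_add, Matrix.trace_smul,
      Matrix.trace_smul, Complex.add_re, smul_eq_mul, smul_eq_mul, Complex.re_ofReal_mul,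
      Complex.re_ofReal_mul, hF₀, hF₁]
  have hdual' := hdual V hVpsd
  rw [htrV] at hdual'
  have hsum : c₀ * Real.sqrt p * F₀ + c₁ * Real.sqrt (1 - p) * F₁ = R := by
    rw [hc₀, hc₁]
    have e0 : Real.sqrt p * Real.sqrt p = p := Real.mul_self_sqrt hp₀
    have e1 : Real.sqrt (1 - p) * Real.sqrt (1 - p) = 1 - p := Real.mul_self_sqrt hp₁'
    have h1 : Real.sqrt p * F₀ / R * Real.sqrt p * F₀ = p * F₀ ^ 2 / R := by
      calc Real.sqrt p * F₀ / R * Real.sqrt p * F₀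
          = Real.sqrt p * Real.sqrt p * F₀ ^ 2 / R := by ring
        _ = p * F₀ ^ 2 / R := by rw [e0]
    have h2 : Real.sqrt (1 - p) * F₁ / R * Real.sqrt (1 - p) * F₁ = (1 - p) * F₁ ^ 2 / R := by
      calc Real.sqrt (1 - p) * F₁ / R * Real.sqrt (1 - p) * F₁
          = Real.sqrt (1 - p) * Real.sqrt (1 - p) * F₁ ^ 2 / R := by ring
        _ = (1 - p) * F₁ ^ 2 / R := by rw [e1]
    rw [h1, h2, ← add_div, ← hRsq, pow_two, mul_div_assoc, div_self hRpos'.ne', mul_one]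
  rw [hsum] at hdual'
  calc p * F₀ ^ 2 + (1 - p) * F₁ ^ 2 = R ^ 2 := hRsq.symm
    _ ≤ (((msqrt (Cᴴ * C)).trace).re) ^ 2 := pow_le_pow_left₀ hRpos'.le hdual' 2

lemma kraus_psd {d d' K : ℕ} (A : Fin K → Matrix (Fin d') (Fin d) ℂ)
    {x : Matrix (Fin d) (Fin d) ℂ} (hx : x.PosSemidef) : (krausMap A x).PosSemidef := by
  unfold krausMap
  exact Finset.sum_induction _ _ (fun a b ha hb => ha.add hb) Matrix.PosSemidef.zero
    (fun k _ => hx.mul_mul_conjTranspose_same (A k))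

lemma kraus_lin {d d' K : ℕ} (A : Fin K → Matrix (Fin d') (Fin d) ℂ) (a b : ℂ)
    (x y : Matrix (Fin d) (Fin d) ℂ) :
    krausMap A (a • x + b • y) = a • krausMap A x + b • krausMap A y := by
  unfold krausMap
  simp [Matrix.mul_add, Matrix.add_mul, Matrix.mul_smul, Matrix.smul_mul,
    Finset.sum_add_distrib, Finset.smul_sum]

end InfidelityAux

open InfidelityAux in
/-- The infidelity cost `C_F(π) = 1 − F(π)²` is convex on density matrices. -/
theorem infidelityCost_convex {d d' K : ℕ}
    (A : Fin K → Matrix (Fin d') (Fin d) ℂ)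
    (hA : ∑ k, (A k)ᴴ * A k = 1)
    (χE : Matrix (Fin d') (Fin d') ℂ) (hχ : χE.PosSemidef)
    (π₀ π₁ : Matrix (Fin d) (Fin d) ℂ)
    (hπ₀ : π₀.PosSemidef) (hπ₀t : π₀.trace = 1)
    (hπ₁ : π₁.PosSemidef) (hπ₁t : π₁.trace = 1)
    (p : ℝ) (hp₀ : 0 ≤ p) (hp₁ : p ≤ 1) :
    1 - (fidelity A χE ((p : ℂ) • π₀ + ((1 - p : ℝ) : ℂ) • π₁)) ^ 2 ≤
      p * (1 - (fidelity A χE π₀) ^ 2) + (1 - p) * (1 - (fidelity A χE π₁) ^ 2) := by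
  have hρ₀ : (krausMap A π₀).PosSemidef := kraus_psd A hπ₀
  have hρ₁ : (krausMap A π₁).PosSemidef := kraus_psd A hπ₁
  obtain ⟨S, hSdef⟩ : ∃ S, S = hχ.sqrt := ⟨_, rfl⟩
  have hS : msqrt χE = S := hSdef ▸ msqrt_eq hχ
  have hSH : Sᴴ = S := hSdef ▸ hχ.posSemidef_sqrt.1
  obtain ⟨B₀, hB₀def⟩ : ∃ B, B = hρ₀.sqrt * S := ⟨_, rfl⟩
  obtain ⟨B₁, hB₁def⟩ : ∃ B, B = hρ₁.sqrt * S := ⟨_, rfl⟩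
  have hB₀ : B₀ᴴ * B₀ = S * krausMap A π₀ * S := by
    rw [hB₀def, Matrix.conjTranspose_mul, hSH, hρ₀.posSemidef_sqrt.1, Matrix.mul_assoc,
      ← Matrix.mul_assoc hρ₀.sqrt, hρ₀.sqrt_mul_self, ← Matrix.mul_assoc]
  have hB₁ : B₁ᴴ * B₁ = S * krausMap A π₁ * S := by
    rw [hB₁def, Matrix.conjTranspose_mul, hSH, hρ₁.posSemidef_sqrt.1, Matrix.mul_assoc,
      ← Matrix.mul_assoc hρ₁.sqrt, hρ₁.sqrt_mul_self, ← Matrix.mul_assoc]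
  have hmix : krausMap A ((p : ℂ) • π₀ + ((1 - p : ℝ) : ℂ) • π₁)
      = (p : ℂ) • krausMap A π₀ + ((1 - p : ℝ) : ℂ) • krausMap A π₁ := kraus_lin A _ _ _ _
  have hMeq : S * krausMap A ((p : ℂ) • π₀ + ((1 - p : ℝ) : ℂ) • π₁) * S
      = (p : ℂ) • (B₀ᴴ * B₀) + ((1 - p : ℝ) : ℂ) • (B₁ᴴ * B₁) := by
    rw [hmix, hB₀, hB₁, Matrix.mul_add, Matrix.add_mul, Matrix.mul_smul, Matrix.smul_mul,
      Matrix.mul_smul, Matrix.smul_mul]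
  have hfid₀ : fidelity A χE π₀ = ((msqrt (B₀ᴴ * B₀)).trace).re := by
    rw [fidelity, hS, ← hB₀]
  have hfid₁ : fidelity A χE π₁ = ((msqrt (B₁ᴴ * B₁)).trace).re := by
    rw [fidelity, hS, ← hB₁]
  have hfidmix : fidelity A χE ((p : ℂ) • π₀ + ((1 - p : ℝ) : ℂ) • π₁)
      = ((msqrt ((p : ℂ) • (B₀ᴴ * B₀) + ((1 - p : ℝ) : ℂ) • (B₁ᴴ * B₁))).trace).re := by
    rw [fidelity, hS, hMeq]
  have hcore := core B₀ B₁ p hp₀ hp₁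
  rw [hfid₀, hfid₁, hfidmix]
  nlinarith [hcore]
end

section
/- Let X be a Hermitian d×d complex matrix and let μ > 0. Then Tr[h_μ(X)] is the greatest element of the set { Tr[Y·X] − (μ/2)·Tr[Y²] : Y Hermitian d×d with −I ≼ Y ≼ I }, and the maximum is attained at Y = h'_μ(X) (which satisfies −I ≼ h'_μ(X) ≼ I). In other words, the smooth trace norm t_μ(X) := max_{‖Y‖_∞ ≤ 1} ( ⟨Y,X⟩ − (μ/2)‖Y‖₂² ) over Hermitian Y equals Tr[h_μ(X)], with maximizer h'_μ(X). -/
open Matrix BigOperators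
open scoped ComplexOrder Classical

/-- The Huber penalty function `h_μ`. -/
noncomputable def huber (μ x : ℝ) : ℝ :=
  if |x| < μ then x ^ 2 / (2 * μ) else |x| - μ / 2

/-- The derivative `h'_μ` of the Huber penalty function. -/
noncomputable def huberDeriv (μ x : ℝ) : ℝ :=
  if |x| < μ then x / μ else Real.sign x

/-- Junk-valued matrix Huber function: for a Hermitian matrix it applies `h_μ` to the
eigenvalues through the spectral decomposition, otherwise it is `0`. -/
noncomputable def mhuber {n : Type*} [Fintype n] [DecidableEq n]
    (μ : ℝ) (M : Matrix n n ℂ) : Matrix n n ℂ :=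
  if h : M.IsHermitian then
    (h.eigenvectorUnitary : Matrix n n ℂ) *
      Matrix.diagonal (fun i => (huber μ (h.eigenvalues i) : ℂ)) *
      (h.eigenvectorUnitary : Matrix n n ℂ)ᴴ
  else 0

/-- Junk-valued matrix version of `h'_μ` via the spectral decomposition. -/
noncomputable def mhuberDeriv {n : Type*} [Fintype n] [DecidableEq n]
    (μ : ℝ) (M : Matrix n n ℂ) : Matrix n n ℂ :=
  if h : M.IsHermitian then
    (h.eigenvectorUnitary : Matrix n n ℂ) *
      Matrix.diagonal (fun i => (huberDeriv μ (h.eigenvalues i) : ℂ)) *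
      (h.eigenvectorUnitary : Matrix n n ℂ)ᴴ
  else 0

lemma huberDeriv_abs_le {μ : ℝ} (hμ : 0 < μ) (x : ℝ) : |huberDeriv μ x| ≤ 1 := by
  unfold huberDeriv
  split_ifs with h
  · rw [abs_div, abs_of_pos hμ]
    exact (div_le_one hμ).2 h.le
  · rcases lt_trichotomy x 0 with hx | hx | hx
    · simp [Real.sign_of_neg hx]
    · simp [hx, Real.sign_zero]
    · simp [Real.sign_of_pos hx]

lemma huber_le {μ : ℝ} (hμ : 0 < μ) (x y : ℝ) (hy : |y| ≤ 1) :
    y * x - μ / 2 * y ^ 2 ≤ huber μ x := by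
  unfold huber
  rw [abs_le] at hy
  split_ifs with h
  · rw [le_div_iff₀ (by positivity)]
    nlinarith [sq_nonneg (μ * y - x)]
  · rw [not_lt] at h
    rcases abs_cases x with ⟨he, _⟩ | ⟨he, _⟩ <;> rw [he] at h ⊢ <;>
      nlinarith [sq_nonneg (1 - y), sq_nonneg (1 + y)]

lemma huberDeriv_eq {μ : ℝ} (hμ : 0 < μ) (x : ℝ) :
    huberDeriv μ x * x - μ / 2 * huberDeriv μ x ^ 2 = huber μ x := by
  unfold huber huberDeriv
  split_ifs with h
  · field_simp; ring
  · rw [not_lt] at h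
    rcases lt_trichotomy x 0 with hx | hx | hx
    · rw [Real.sign_of_neg hx, abs_of_neg hx]; ring
    · subst hx; simp at h; linarith
    · rw [Real.sign_of_pos hx, abs_of_pos hx]; ring

section aux
variable {n : Type*} [Fintype n] [DecidableEq n]

lemma aux_trace_conj {U A : Matrix n n ℂ} (hU : Uᴴ * U = 1) :
    (U * A * Uᴴ).trace = A.trace := by
  rw [Matrix.trace_mul_cycle, hU, Matrix.one_mul]

lemma aux_diag_nonneg {A : Matrix n n ℂ} (hA : A.PosSemidef) (i : n) : 0 ≤ A i i := by
  exact hA.diag_nonneg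

set_option linter.unusedSectionVars false in
lemma aux_diag_herm (f : n → ℝ) :
    (Matrix.diagonal (fun i => (f i : ℂ))).IsHermitian :=
  Matrix.isHermitian_diagonal_of_self_adjoint _ (by
    ext i; simp [Pi.star_apply, Complex.conj_ofReal])

end aux

/-- `Tr[h_μ(X)]` is the greatest value of `Tr[Y X] − (μ/2) Tr[Y²]` over Hermitian `Y` with
`−I ≼ Y ≼ I`, and the maximum is attained at `Y = h'_μ(X)`. -/
theorem smoothTraceNorm_isGreatest {d : ℕ}
    (X : Matrix (Fin d) (Fin d) ℂ) (hX : X.IsHermitian)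
    (μ : ℝ) (hμ : 0 < μ) :
    IsGreatest
      {r : ℝ | ∃ Y : Matrix (Fin d) (Fin d) ℂ, Y.IsHermitian ∧
        (1 - Y).PosSemidef ∧ (1 + Y).PosSemidef ∧
        r = (Y * X).trace.re - μ / 2 * (Y * Y).trace.re}
      ((mhuber μ X).trace.re) ∧
    (1 - mhuberDeriv μ X).PosSemidef ∧ (1 + mhuberDeriv μ X).PosSemidef ∧
    (mhuberDeriv μ X * X).trace.re - μ / 2 * (mhuberDeriv μ X * mhuberDeriv μ X).trace.re =
      (mhuber μ X).trace.re := by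
  classical
  set U : Matrix (Fin d) (Fin d) ℂ := (hX.eigenvectorUnitary : Matrix (Fin d) (Fin d) ℂ) with hUdef
  set E : Fin d → ℝ := hX.eigenvalues with hEdef
  have hU2 : Uᴴ * U = 1 := by
    rw [← Matrix.star_eq_conjTranspose]
    exact Matrix.mem_unitaryGroup_iff'.mp hX.eigenvectorUnitary.2
  have hU1 : U * Uᴴ = 1 := by
    rw [← Matrix.star_eq_conjTranspose]
    exact Matrix.mem_unitaryGroup_iff.mp hX.eigenvectorUnitary.2
  have hXd : X = U * Matrix.diagonal (fun i => (E i : ℂ)) * Uᴴ := by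
    have := hX.spectral_theorem
    rw [Unitary.conjStarAlgAut_apply, Matrix.star_eq_conjTranspose] at this
    exact this
  have hmh : mhuber μ X = U * Matrix.diagonal (fun i => (huber μ (E i) : ℂ)) * Uᴴ := by
    rw [mhuber, dif_pos hX]
  have hmhd : mhuberDeriv μ X = U * Matrix.diagonal (fun i => (huberDeriv μ (E i) : ℂ)) * Uᴴ := by
    rw [mhuberDeriv, dif_pos hX]
  have hconjmul : ∀ A B : Matrix (Fin d) (Fin d) ℂ,
      (U * A * Uᴴ) * (U * B * Uᴴ) = U * (A * B) * Uᴴ := by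
    intro A B
    simp only [Matrix.mul_assoc]
    rw [← Matrix.mul_assoc Uᴴ U, hU2, Matrix.one_mul]
  have htrace : ∀ f : Fin d → ℝ,
      (U * Matrix.diagonal (fun i => (f i : ℂ)) * Uᴴ).trace.re = ∑ i, f i := by
    intro f
    rw [aux_trace_conj hU2, Matrix.trace_diagonal, ← Complex.ofReal_sum]
    simp
  have htrace2 : ∀ f g : Fin d → ℝ,
      ((U * Matrix.diagonal (fun i => (f i : ℂ)) * Uᴴ) *
        (U * Matrix.diagonal (fun i => (g i : ℂ)) * Uᴴ)).trace.re = ∑ i, f i * g i := by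
    intro f g
    rw [hconjmul, Matrix.diagonal_mul_diagonal]
    have : (fun i => (f i : ℂ) * (g i : ℂ)) = fun i => ((f i * g i : ℝ) : ℂ) := by
      funext i; push_cast; ring
    rw [this, htrace]
  have htmh : (mhuber μ X).trace.re = ∑ i, huber μ (E i) := by rw [hmh, htrace]
  -- positive semidefiniteness machinery
  have hpsdgen : ∀ g : Fin d → ℝ, (∀ i, 0 ≤ g i) →
      (U * Matrix.diagonal (fun i => (g i : ℂ)) * Uᴴ).PosSemidef := by
    intro g hg
    apply Matrix.PosSemidef.mul_mul_conjTranspose_same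
    rw [Matrix.posSemidef_diagonal_iff]
    intro i
    rw [Complex.zero_le_real]
    exact hg i
  have hone : (1 : Matrix (Fin d) (Fin d) ℂ)
      = U * Matrix.diagonal (fun _ : Fin d => ((1 : ℝ) : ℂ)) * Uᴴ := by
    have : Matrix.diagonal (fun _ : Fin d => ((1 : ℝ) : ℂ)) = 1 := by
      simp
    rw [this, Matrix.mul_one, hU1]
  have hsub : ∀ f : Fin d → ℝ,
      1 - U * Matrix.diagonal (fun i => (f i : ℂ)) * Uᴴ
        = U * Matrix.diagonal (fun i => ((1 - f i : ℝ) : ℂ)) * Uᴴ := by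
    intro f
    have hc : (fun i => ((1 - f i : ℝ) : ℂ)) = fun i => ((1 : ℝ) : ℂ) - (f i : ℂ) := by
      funext i; push_cast; ring
    have hd : Matrix.diagonal (fun i => ((1 - f i : ℝ) : ℂ))
        = Matrix.diagonal (fun _ : Fin d => ((1 : ℝ) : ℂ))
          - Matrix.diagonal (fun i => (f i : ℂ)) := by
      rw [hc, Matrix.diagonal_sub]
    rw [hd, Matrix.mul_sub, Matrix.sub_mul, ← hone]
  have hadd : ∀ f : Fin d → ℝ,
      1 + U * Matrix.diagonal (fun i => (f i : ℂ)) * Uᴴ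
        = U * Matrix.diagonal (fun i => ((1 + f i : ℝ) : ℂ)) * Uᴴ := by
    intro f
    have hc : (fun i => ((1 + f i : ℝ) : ℂ)) = fun i => ((1 : ℝ) : ℂ) + (f i : ℂ) := by
      funext i; push_cast; ring
    have hd : Matrix.diagonal (fun i => ((1 + f i : ℝ) : ℂ))
        = Matrix.diagonal (fun _ : Fin d => ((1 : ℝ) : ℂ))
          + Matrix.diagonal (fun i => (f i : ℂ)) := by
      rw [hc, Matrix.diagonal_add]
    rw [hd, Matrix.mul_add, Matrix.add_mul, ← hone]
  have hDabs : ∀ i, |huberDeriv μ (E i)| ≤ 1 := fun i => huberDeriv_abs_le hμ _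
  have hpsd1 : (1 - mhuberDeriv μ X).PosSemidef := by
    rw [hmhd, hsub]
    exact hpsdgen _ (fun i => by have := (abs_le.mp (hDabs i)).2; linarith)
  have hpsd2 : (1 + mhuberDeriv μ X).PosSemidef := by
    rw [hmhd, hadd]
    exact hpsdgen _ (fun i => by have := (abs_le.mp (hDabs i)).1; linarith)
  -- attainment
  have hattain : (mhuberDeriv μ X * X).trace.re -
      μ / 2 * (mhuberDeriv μ X * mhuberDeriv μ X).trace.re = (mhuber μ X).trace.re := by
    rw [htmh]
    conv_lhs => rw [hmhd, hXd]
    rw [htrace2, htrace2, Finset.mul_sum, ← Finset.sum_sub_distrib]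
    apply Finset.sum_congr rfl
    intro i _
    linear_combination huberDeriv_eq hμ (E i)
  refine ⟨⟨⟨mhuberDeriv μ X, ?_, hpsd1, hpsd2, hattain.symm⟩, ?_⟩, hpsd1, hpsd2, hattain⟩
  · rw [hmhd]
    exact Matrix.isHermitian_mul_mul_conjTranspose U (aux_diag_herm _)
  -- upper bound
  rintro r ⟨Y, hY, h1, h2, rfl⟩
  set Z : Matrix (Fin d) (Fin d) ℂ := Uᴴ * Y * U with hZdef
  have hZh : Z.IsHermitian := by
    have := Matrix.isHermitian_mul_mul_conjTranspose Uᴴ hY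
    rwa [Matrix.conjTranspose_conjTranspose] at this
  have hYZ : Y = U * Z * Uᴴ := by
    rw [hZdef]
    calc Y = (U * Uᴴ) * Y * (U * Uᴴ) := by rw [hU1, Matrix.one_mul, Matrix.mul_one]
    _ = U * (Uᴴ * Y * U) * Uᴴ := by simp only [Matrix.mul_assoc]
  have hZreal : ∀ i, (Z i i).im = 0 := by
    intro i
    have h := congrFun (congrFun hZh i) i
    rw [Matrix.conjTranspose_apply] at h
    have h2 := congrArg Complex.im h
    simp at h2
    linarith
  have hZd1 : ∀ i, (Z i i).re ≤ 1 := by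
    intro i
    have hps : (Uᴴ * (1 - Y) * U).PosSemidef := h1.conjTranspose_mul_mul_same U
    have he : Uᴴ * (1 - Y) * U = 1 - Z := by
      rw [Matrix.mul_sub, Matrix.sub_mul, Matrix.mul_one, hU2, ← hZdef]
    rw [he] at hps
    have h := (Complex.le_def.mp (aux_diag_nonneg hps i)).1
    simp only [Matrix.sub_apply, Matrix.one_apply_eq, Complex.sub_re, Complex.one_re,
      Complex.zero_re] at h
    linarith
  have hZd2 : ∀ i, -1 ≤ (Z i i).re := by
    intro i
    have hps : (Uᴴ * (1 + Y) * U).PosSemidef := h2.conjTranspose_mul_mul_same U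
    have he : Uᴴ * (1 + Y) * U = 1 + Z := by
      rw [Matrix.mul_add, Matrix.add_mul, Matrix.mul_one, hU2, ← hZdef]
    rw [he] at hps
    have h := (Complex.le_def.mp (aux_diag_nonneg hps i)).1
    simp only [Matrix.add_apply, Matrix.one_apply_eq, Complex.add_re, Complex.one_re,
      Complex.zero_re] at h
    linarith
  -- trace (Y * X) in terms of Z
  have ht1 : (Y * X).trace.re = ∑ i, (Z i i).re * E i := by
    have hm : Y * X = U * (Z * Matrix.diagonal (fun i => (E i : ℂ))) * Uᴴ := by
      conv_lhs => rw [hYZ, hXd]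
      rw [hconjmul]
    rw [hm, aux_trace_conj hU2, Matrix.trace, Complex.re_sum]
    apply Finset.sum_congr rfl
    intro i _
    rw [Matrix.diag_apply, Matrix.mul_diagonal]
    simp [Complex.mul_re]
  -- trace (Y * Y) dominates the diagonal squares
  have ht2 : ∑ i, (Z i i).re ^ 2 ≤ (Y * Y).trace.re := by
    have hm : Y * Y = U * (Z * Z) * Uᴴ := by
      conv_lhs => rw [hYZ]
      rw [hconjmul]
    rw [hm, aux_trace_conj hU2]
    have hdiag : ∀ i j, Z j i = (starRingEnd ℂ) (Z i j) := by
      intro i j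
      have h := congrFun (congrFun hZh j) i
      rw [Matrix.conjTranspose_apply, Complex.star_def] at h
      exact h.symm
    have he : (Z * Z).trace.re = ∑ i, ∑ j, Complex.normSq (Z i j) := by
      rw [Matrix.trace, Complex.re_sum]
      apply Finset.sum_congr rfl
      intro i _
      rw [Matrix.diag_apply, Matrix.mul_apply, Complex.re_sum]
      apply Finset.sum_congr rfl
      intro j _
      rw [hdiag i j, Complex.mul_conj]
      simp
    rw [he]
    calc ∑ i, (Z i i).re ^ 2 ≤ ∑ i, Complex.normSq (Z i i) := by
          apply Finset.sum_le_sum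
          intro i _
          rw [Complex.normSq_apply, hZreal i]
          nlinarith
      _ ≤ ∑ i, ∑ j, Complex.normSq (Z i j) := by
          apply Finset.sum_le_sum
          intro i _
          exact Finset.single_le_sum (fun j _ => Complex.normSq_nonneg _) (Finset.mem_univ i)
  -- put everything together
  rw [ht1, htmh]
  have hmain : ∑ i, (Z i i).re * E i - μ / 2 * (∑ i, (Z i i).re ^ 2)
      ≤ ∑ i, huber μ (E i) := by
    rw [Finset.mul_sum, ← Finset.sum_sub_distrib]
    apply Finset.sum_le_sum
    intro i _
    exact huber_le hμ (E i) ((Z i i).re) (abs_le.mpr ⟨hZd2 i, hZd1 i⟩)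
  have h4 : μ / 2 * (∑ i, (Z i i).re ^ 2) ≤ μ / 2 * (Y * Y).trace.re :=
    mul_le_mul_of_nonneg_left ht2 (by positivity)
  linarith
end
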